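/- Let x, y ∈ A with 0 ≤ x ≤ y, and let ε > 0 be a real number. Then y + ε·1 is invertible in A, √x · (y + ε·1)⁻¹ · √x ≤ 1, and ‖x − √x · y · (y + ε·1)⁻¹ · √x‖ ≤ ε. -/

import Mathlib

/-- The estimates inside the proof of the paper's Proposition 5.4: for `0 ≤ x ≤ y` in a unital
C*-algebra and `ε > 0`, the element `y + ε·1` is invertible,
`√x · (y + ε·1)⁻¹ · √x ≤ 1`, and `‖x − √x · y · (y + ε·1)⁻¹ · √x‖ ≤ ε`. -/
theorem stmt19 {A : Type*} [CStarAlgebra A] [PartialOrder A] [StarOrderedRing A]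
    (x y : A) (hx : 0 ≤ x) (hxy : x ≤ y) (ε : ℝ) (hε : 0 < ε) :
    IsUnit (y + ε • (1 : A)) ∧
    CFC.sqrt x * Ring.inverse (y + ε • (1 : A)) * CFC.sqrt x ≤ 1 ∧
    ‖x - CFC.sqrt x * y * Ring.inverse (y + ε • (1 : A)) * CFC.sqrt x‖ ≤ ε := by
  have hy : (0 : A) ≤ y := hx.trans hxy
  -- ε • 1 is a unit
  have hεu : IsUnit (ε • (1 : A)) := by
    refine ⟨⟨ε • 1, ε⁻¹ • 1, ?_, ?_⟩, rfl⟩ <;>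
      simp [smul_smul, mul_inv_cancel₀ hε.ne', inv_mul_cancel₀ hε.ne']
  have hε1 : (0 : A) ≤ ε • (1 : A) := smul_nonneg hε.le zero_le_one
  have hle : ε • (1 : A) ≤ y + ε • (1 : A) := le_add_of_nonneg_left hy
  have hu : IsUnit (y + ε • (1 : A)) := CStarAlgebra.isUnit_of_le _ hle (IsStrictlyPositive.iff_of_unital.mpr ⟨hε1, hεu⟩)
  refine ⟨hu, ?_⟩
  lift (y + ε • (1 : A)) to Aˣ using hu with B hB
  have hBnn : (0 : A) ≤ (B : A) := hε1.trans hle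
  have hBinv : (0 : A) ≤ ((B⁻¹ : Aˣ) : A) := CFC.inv_nonneg_of_nonneg B hBnn
  have hxB : x ≤ (B : A) := hxy.trans (by rw [hB]; exact le_add_of_nonneg_right hε1)
  -- the norm estimate
  have hnorm : ‖CFC.sqrt x * CFC.sqrt ((B⁻¹ : Aˣ) : A)‖ ≤ 1 :=
    (le_iff_norm_sqrt_mul_sqrt_inv hx hBnn).mp hxB
  have hRi : Ring.inverse ((B : A)) = ((B⁻¹ : Aˣ) : A) := Ring.inverse_unit B
  set u : A := CFC.sqrt x * CFC.sqrt ((B⁻¹ : Aˣ) : A) with hu_def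
  have hz_eq : CFC.sqrt x * ((B⁻¹ : Aˣ) : A) * CFC.sqrt x = u * star u := by
    rw [hu_def, star_mul, (IsSelfAdjoint.of_nonneg (CFC.sqrt_nonneg _) : IsSelfAdjoint
        (CFC.sqrt ((B⁻¹ : Aˣ) : A))), (IsSelfAdjoint.of_nonneg (CFC.sqrt_nonneg _) :
        IsSelfAdjoint (CFC.sqrt x))]
    have hsq : CFC.sqrt ((B⁻¹ : Aˣ) : A) * CFC.sqrt ((B⁻¹ : Aˣ) : A) = ((B⁻¹ : Aˣ) : A) :=
      CFC.sqrt_mul_sqrt_self _ hBinv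
    conv_lhs => rw [← hsq]
    simp [mul_assoc]
  have hz_nn : (0 : A) ≤ CFC.sqrt x * ((B⁻¹ : Aˣ) : A) * CFC.sqrt x := by
    have := star_left_conjugate_nonneg hBinv (CFC.sqrt x)
    rwa [(IsSelfAdjoint.of_nonneg (CFC.sqrt_nonneg _) : IsSelfAdjoint (CFC.sqrt x))] at this
  have hz_norm : ‖CFC.sqrt x * ((B⁻¹ : Aˣ) : A) * CFC.sqrt x‖ ≤ 1 := by
    rw [hz_eq, CStarRing.norm_self_mul_star]
    exact mul_le_one₀ hnorm (norm_nonneg _) hnorm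
  have hz_le : CFC.sqrt x * ((B⁻¹ : Aˣ) : A) * CFC.sqrt x ≤ 1 :=
    (CStarAlgebra.norm_le_one_iff_of_nonneg _ hz_nn).mp hz_norm
  rw [hRi]
  refine ⟨hz_le, ?_⟩
  -- rewrite y = B - ε • 1
  have hy_eq : y = (B : A) - ε • (1 : A) := by rw [hB]; abel
  have hyBinv : y * ((B⁻¹ : Aˣ) : A) = 1 - ε • ((B⁻¹ : Aˣ) : A) := by
    rw [hy_eq, sub_mul, B.mul_inv, smul_mul_assoc, one_mul]
  have key : x - CFC.sqrt x * y * ((B⁻¹ : Aˣ) : A) * CFC.sqrt x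
      = ε • (CFC.sqrt x * ((B⁻¹ : Aˣ) : A) * CFC.sqrt x) := by
    rw [mul_assoc (CFC.sqrt x) y, hyBinv]
    have : CFC.sqrt x * (1 - ε • ((B⁻¹ : Aˣ) : A)) * CFC.sqrt x
        = x - ε • (CFC.sqrt x * ((B⁻¹ : Aˣ) : A) * CFC.sqrt x) := by
      rw [mul_sub, sub_mul, mul_one, CFC.sqrt_mul_sqrt_self x hx]
      simp [mul_smul_comm, smul_mul_assoc, mul_assoc]
    rw [this, sub_sub_cancel]
  rw [key, norm_smul, Real.norm_eq_abs, abs_of_pos hε]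
  calc ε * ‖CFC.sqrt x * ((B⁻¹ : Aˣ) : A) * CFC.sqrt x‖ ≤ ε * 1 := by
        exact mul_le_mul_of_nonneg_left hz_norm hε.le
    _ = ε := mul_one ε
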